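/- Suppose the structure ℜ expanding the real field has the property that every definable subset E of ℝⁿ all of whose coordinate projections to ℝ have empty interior satisfies: for every ε > 0 there is C > 0 with #E(ℚ,T) ≤ C T^ε for all T ≥ 1. Then for every definable set E ⊆ ℝ, #E^{trans}(ℚ,T) = o(T) as T → ∞, where E^{trans} is E with all infinite semialgebraic subsets removed. -/
import Mathlib


/-- The height of a rational number `p/q` in lowest terms is `max |p| |q|`. -/
def qheight (q : ℚ) : ℕ := max q.num.natAbs q.den

/-- The number of rational points of `X ⊆ ℝ` of height at most `T`. -/
noncomputable def ratCount (X : Set ℝ) (T : ℝ) : ℕ :=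
  Set.ncard {q : ℚ | (q : ℝ) ∈ X ∧ (qheight q : ℝ) ≤ T}

/-- The number of rational points of `E ⊆ ℝⁿ` of height at most `T`. -/
noncomputable def ratCountN (n : ℕ) (E : Set (Fin n → ℝ)) (T : ℝ) : ℕ :=
  Set.ncard {q : Fin n → ℚ | (fun i => (q i : ℝ)) ∈ E ∧ ∀ i, (qheight (q i) : ℝ) ≤ T}

/-- A subset of `ℝ` is semialgebraic iff it is a finite union of sets of the form
`{x | p(x) = 0 ∧ q(x) > 0}` for polynomials `p, q`. -/
def IsSemialgebraic (S : Set ℝ) : Prop :=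
  ∃ (k : ℕ) (p q : Fin k → Polynomial ℝ),
    S = ⋃ i, {x : ℝ | (p i).eval x = 0 ∧ 0 < (q i).eval x}

/-- The transcendental part of `E ⊆ ℝ`: `E` with all infinite semialgebraic
subsets removed. -/
def transPart (E : Set ℝ) : Set ℝ :=
  E \ ⋃₀ {S : Set ℝ | S ⊆ E ∧ IsSemialgebraic S ∧ S.Infinite}


lemma finite_height (P : ℚ → Prop) (T : ℝ) :
    {q : ℚ | P q ∧ (qheight q : ℝ) ≤ T}.Finite := by
  set N := ⌈T⌉₊ with hN
  have hsub : {q : ℚ | P q ∧ (qheight q : ℝ) ≤ T} ⊆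
      (fun q : ℚ => (q.num, q.den)) ⁻¹' (Set.Icc (-(N:ℤ)) N ×ˢ Set.Iic N) := by
    rintro q ⟨-, hq⟩
    have hNq : qheight q ≤ N := by
      have := hq.trans (Nat.le_ceil T)
      exact_mod_cast this
    have h1 : q.num.natAbs ≤ N := le_trans (le_max_left _ _) hNq
    have h2 : q.den ≤ N := le_trans (le_max_right _ _) hNq
    refine ⟨⟨?_, ?_⟩, h2⟩ <;> simp <;> omega
  exact Set.Finite.subset (Set.Finite.preimage
    (Set.injOn_of_injective (fun a b hab =>
      Rat.ext (congrArg Prod.fst hab) (congrArg Prod.snd hab)))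
    ((Set.finite_Icc _ _).prod (Set.finite_Iic _))) hsub

lemma interior_diff_interior (E : Set ℝ) : interior (E \ interior E) = ∅ := by
  ext x
  simp only [Set.mem_empty_iff_false, iff_false]
  intro hx
  have h1 : x ∈ interior E := interior_mono Set.diff_subset hx
  have h2 : x ∈ E \ interior E := interior_subset hx
  exact h2.2 h1

lemma semialg_Ioo (a b : ℝ) (hab : a < b) : IsSemialgebraic (Set.Ioo a b) := by
  refine ⟨1, fun _ => 0, fun _ =>
    (Polynomial.X - Polynomial.C a) * (Polynomial.C b - Polynomial.X), ?_⟩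
  ext x
  simp only [Set.mem_Ioo, Set.mem_iUnion, Polynomial.eval_mul, Polynomial.eval_sub,
    Polynomial.eval_X, Polynomial.eval_C, Polynomial.eval_zero, Set.mem_setOf_eq,
    eq_self_iff_true, true_and, mul_pos_iff]
  constructor
  · rintro ⟨h1, h2⟩
    exact ⟨0, Or.inl ⟨by linarith, by linarith⟩⟩
  · rintro ⟨i, (⟨h1, h2⟩ | ⟨h1, h2⟩)⟩ <;> constructor <;> linarith

lemma transPart_subset (E : Set ℝ) : transPart E ⊆ E \ interior E := by
  rintro x ⟨hxE, hx⟩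
  refine ⟨hxE, fun hxint => hx ?_⟩
  obtain ⟨δ, hδ, hball⟩ := Metric.mem_nhds_iff.mp (mem_interior_iff_mem_nhds.mp hxint)
  rw [Real.ball_eq_Ioo] at hball
  exact ⟨Set.Ioo (x - δ) (x + δ), ⟨hball, semialg_Ioo _ _ (by linarith),
    Set.Ioo_infinite (by linarith)⟩, Set.mem_Ioo.mpr ⟨by linarith, by linarith⟩⟩


/-- Implication 3 ⇒ 1 of Proposition 4.2: if, in a structure `D` on the real
field (so that `E ↦ E \ int E` preserves definability of subsets of `ℝ`), every
definable `E ⊆ ℝⁿ` all of whose coordinate projections have empty interior has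
sub-polynomial rational count, then for every definable `E ⊆ ℝ` the count
`#E^trans(ℚ, T)` is `o(T)`. -/
theorem subpolynomial_implies_littleO (D : ∀ n : ℕ, Set (Set (Fin n → ℝ)))
    (hD : ∀ E : Set ℝ, {v : Fin 1 → ℝ | v 0 ∈ E} ∈ D 1 →
      {v : Fin 1 → ℝ | v 0 ∈ E \ interior E} ∈ D 1)
    (hcount : ∀ n : ℕ, ∀ E ∈ D n,
      (∀ i : Fin n, interior ((fun v => v i) '' E) = ∅) →
      ∀ ε : ℝ, 0 < ε → ∃ C : ℝ, 0 < C ∧ ∀ T : ℝ, 1 ≤ T →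
        (ratCountN n E T : ℝ) ≤ C * T ^ ε)
    (E : Set ℝ) (hE : {v : Fin 1 → ℝ | v 0 ∈ E} ∈ D 1) :
    (fun T : ℝ => (ratCount (transPart E) T : ℝ)) =o[Filter.atTop] (fun T => T) := by
  set E' := E \ interior E with hE'def
  have hmem : {v : Fin 1 → ℝ | v 0 ∈ E'} ∈ D 1 := hD E hE
  have hproj : ∀ i : Fin 1, interior ((fun v => v i) '' {v : Fin 1 → ℝ | v 0 ∈ E'}) = ∅ := by
    intro i
    have himg : (fun v : Fin 1 → ℝ => v i) '' {v | v 0 ∈ E'} = E' := by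
      ext x
      constructor
      · rintro ⟨v, hv, rfl⟩
        rw [Subsingleton.elim i 0]
        exact hv
      · intro hx
        exact ⟨fun _ => x, hx, rfl⟩
    rw [himg]
    exact interior_diff_interior E
  have key := hcount 1 _ hmem hproj
  rw [Asymptotics.isLittleO_iff]
  intro c hc
  obtain ⟨C, hC, hbound⟩ := key (1/2) (by norm_num)
  filter_upwards [Filter.eventually_ge_atTop (max 1 ((C/c)^2))] with T hT
  have hT1 : (1:ℝ) ≤ T := le_trans (le_max_left _ _) hT
  have hT2 : (C/c)^2 ≤ T := le_trans (le_max_right _ _) hT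
  have hT0 : (0:ℝ) ≤ T := by linarith
  have h1 : (ratCount (transPart E) T : ℝ) ≤ (ratCount E' T : ℝ) := by
    have hsub : {q : ℚ | (q:ℝ) ∈ transPart E ∧ (qheight q : ℝ) ≤ T} ⊆
        {q : ℚ | (q:ℝ) ∈ E' ∧ (qheight q : ℝ) ≤ T} :=
      fun q hq => ⟨transPart_subset E hq.1, hq.2⟩
    exact_mod_cast Set.ncard_le_ncard hsub (finite_height _ _)
  have h2 : (ratCount E' T : ℝ) = (ratCountN 1 {v : Fin 1 → ℝ | v 0 ∈ E'} T : ℝ) := by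
    unfold ratCount ratCountN
    have heq : {q : Fin 1 → ℚ | (fun i => (q i : ℝ)) ∈ {v : Fin 1 → ℝ | v 0 ∈ E'} ∧
        ∀ i, (qheight (q i) : ℝ) ≤ T}
        = (fun q : ℚ => (fun _ : Fin 1 => q)) '' {q : ℚ | (q:ℝ) ∈ E' ∧ (qheight q : ℝ) ≤ T} := by
      ext v
      simp only [Set.mem_setOf_eq, Set.mem_image]
      constructor
      · rintro ⟨hv1, hv2⟩
        exact ⟨v 0, ⟨hv1, hv2 0⟩, funext fun i => by rw [Subsingleton.elim i 0]⟩
      · rintro ⟨q, ⟨hq1, hq2⟩, rfl⟩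
        exact ⟨hq1, fun i => hq2⟩
    rw [heq, Set.ncard_image_of_injective _ (fun a b hab => congrFun hab 0)]
  have h3 := hbound T hT1
  have hs0 : Real.sqrt T = T ^ ((1:ℝ)/2) := Real.sqrt_eq_rpow T
  have hsq : Real.sqrt T * Real.sqrt T = T := Real.mul_self_sqrt hT0
  have hs1 : C / c ≤ Real.sqrt T := by
    have := Real.sqrt_le_sqrt hT2
    rw [Real.sqrt_sq_eq_abs] at this
    exact le_trans (le_abs_self _) this
  have hs2 : C ≤ c * Real.sqrt T := by
    rw [div_le_iff₀ hc] at hs1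
    linarith [hs1]
  have hfinal : C * T ^ ((1:ℝ)/2) ≤ c * T := by
    rw [← hs0]
    nlinarith [hsq, mul_nonneg (sub_nonneg.mpr hs2) (Real.sqrt_nonneg T)]
  rw [Real.norm_eq_abs, Real.norm_eq_abs, abs_of_nonneg (by positivity : (0:ℝ) ≤ (ratCount (transPart E) T : ℝ)), abs_of_nonneg hT0]
  calc (ratCount (transPart E) T : ℝ) ≤ (ratCount E' T : ℝ) := h1
    _ = _ := h2
    _ ≤ C * T ^ ((1:ℝ)/2) := h3
    _ ≤ c * T := hfinal
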